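/- Let λ ≠ 0, let x, x̃ : ℤ/Nℤ → ℝ, and define p : ℤ/Nℤ → ℝ by p_k = (1/λ)(e^{x̃_k−x_k}−1) + λe^{x_k−x̃_{k−1}}. Then the monodromy matrix T = L_{N−1}·L_{N−2}·⋯·L_1·L_0 satisfies T · (e^{x̃_{−1}}, 1)ᵀ = (∏_{k∈ℤ/Nℤ} e^{x̃_k−x_k}) · (e^{x̃_{−1}}, 1)ᵀ; in particular, ∏_{k∈ℤ/Nℤ} e^{x̃_k−x_k} is an eigenvalue of T. -/

import Mathlib

/-- Transition matrix of the zero curvature representation of the Bäcklund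
transformation for the Toda lattice. -/
noncomputable def todaL (N : ℕ) (lam : ℝ) (x p : ZMod N → ℝ) (i : ℕ) :
    Matrix (Fin 2) (Fin 2) ℝ :=
  !![1 + lam * p (i : ZMod N), -lam ^ 2 * Real.exp (x (i : ZMod N));
     Real.exp (-(x (i : ZMod N))), 0]

/-- Monodromy matrix `T = L_{N-1} ⬝ ⋯ ⬝ L_1 ⬝ L_0`. -/
noncomputable def todaT (N : ℕ) (lam : ℝ) (x p : ZMod N → ℝ) :
    Matrix (Fin 2) (Fin 2) ℝ :=
  ((List.range N).reverse.map (todaL N lam x p)).prod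

set_option linter.unnecessarySeqFocus false in
lemma toda_step (N : ℕ) (lam : ℝ) (hlam : lam ≠ 0) (x xt p : ZMod N → ℝ)
    (hp : ∀ k : ZMod N,
      p k = (1 / lam) * (Real.exp (xt k - x k) - 1) + lam * Real.exp (x k - xt (k - 1)))
    (m : ℕ) :
    (todaL N lam x p m).mulVec ![Real.exp (xt ((m : ZMod N) - 1)), 1] =
      Real.exp (xt ((m : ZMod N) - 1) - x (m : ZMod N)) • ![Real.exp (xt (m : ZMod N)), 1] := by
  set k : ZMod N := (m : ZMod N)
  funext i
  fin_cases i <;>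
    simp [todaL, Matrix.mulVec, dotProduct, hp, k, Real.exp_sub, Real.exp_neg] <;>
    field_simp <;> ring

lemma toda_partial (N : ℕ) (lam : ℝ) (hlam : lam ≠ 0) (x xt p : ZMod N → ℝ)
    (hp : ∀ k : ZMod N,
      p k = (1 / lam) * (Real.exp (xt k - x k) - 1) + lam * Real.exp (x k - xt (k - 1))) :
    ∀ m : ℕ,
      (((List.range m).reverse.map (todaL N lam x p)).prod).mulVec
          ![Real.exp (xt (-1)), 1] =
        (∏ k ∈ Finset.range m, Real.exp (xt ((k : ZMod N) - 1) - x (k : ZMod N))) •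
          ![Real.exp (xt ((m : ZMod N) - 1)), 1] := by
  intro m
  induction m with
  | zero => simp
  | succ m ih =>
      rw [List.range_succ, List.reverse_append, List.reverse_singleton,
        List.singleton_append, List.map_cons, List.prod_cons,
        ← Matrix.mulVec_mulVec, ih, Matrix.mulVec_smul, toda_step N lam hlam x xt p hp m,
        smul_smul, Finset.prod_range_succ]
      have : ((m : ZMod N) + 1 : ZMod N) - 1 = (m : ZMod N) := by ring
      push_cast
      rw [this]

/-- For the periodic Toda lattice, `∏ e^{x̃_k − x_k}` is an
eigenvalue of the monodromy matrix, with eigenvector `(e^{x̃_{−1}}, 1)ᵀ`. -/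
theorem toda_monodromy_eigenvalue
    (N : ℕ) [NeZero N] (lam : ℝ) (hlam : lam ≠ 0) (x xt p : ZMod N → ℝ)
    (hp : ∀ k : ZMod N,
      p k = (1 / lam) * (Real.exp (xt k - x k) - 1) + lam * Real.exp (x k - xt (k - 1))) :
    (todaT N lam x p).mulVec ![Real.exp (xt (-1)), 1] =
      (∏ k : ZMod N, Real.exp (xt k - x k)) • ![Real.exp (xt (-1)), 1] ∧
    Module.End.HasEigenvalue (Matrix.toLin' (todaT N lam x p))
      (∏ k : ZMod N, Real.exp (xt k - x k)) := by
  have hbij : Function.Bijective (fun i : Fin N => ((i : ℕ) : ZMod N)) := by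
    rw [Fintype.bijective_iff_injective_and_card]
    refine ⟨fun i j h => ?_, by simp [ZMod.card]⟩
    have := congrArg ZMod.val h
    simpa [ZMod.val_natCast_of_lt i.2, ZMod.val_natCast_of_lt j.2, Fin.ext_iff] using this
  have hprod : (∏ k ∈ Finset.range N, Real.exp (xt ((k : ZMod N) - 1) - x (k : ZMod N))) =
      ∏ k : ZMod N, Real.exp (xt k - x k) := by
    rw [← Fin.prod_univ_eq_prod_range (fun k => Real.exp (xt ((k : ZMod N) - 1) - x (k : ZMod N))) N,
      Fintype.prod_bijective _ hbij _ (fun j => Real.exp (xt (j - 1) - x j)) (fun i => rfl)]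
    rw [← Real.exp_sum, ← Real.exp_sum]
    congr 1
    rw [Finset.sum_sub_distrib, Finset.sum_sub_distrib]
    congr 1
    exact Fintype.sum_equiv (Equiv.subRight (1 : ZMod N)) _ _ (fun j => rfl)
  have key := toda_partial N lam hlam x xt p hp N
  have hN : ((N : ℕ) : ZMod N) = 0 := ZMod.natCast_self N
  rw [hN] at key
  have h1 : (todaT N lam x p).mulVec ![Real.exp (xt (-1)), 1] =
      (∏ k : ZMod N, Real.exp (xt k - x k)) • ![Real.exp (xt (-1)), 1] := by
    rw [todaT, key, hprod]
    norm_num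
  refine ⟨h1, ?_⟩
  refine Module.End.hasEigenvalue_of_hasEigenvector
    ⟨?_, fun h => ?_⟩ (x := ![Real.exp (xt (-1)), 1])
  · rw [Module.End.mem_eigenspace_iff, Matrix.toLin'_apply, h1]
  · have := congrFun h 1
    simp at this
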